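/- Let E be a module over L⁰ = L⁰(𝔉,ℝ), let 𝒫 be a finite family of L⁰-seminorms on E and ε ∈ L⁰₊₊, and set U = {x ∈ E : p(x) ≤ ε for all p ∈ 𝒫}. If g : E → L⁰₊ satisfies that g(x) is the greatest lower bound in (L⁰, ≤) of {ξ ∈ L⁰₊ : x ∈ ξU} for every x ∈ E (i.e., g = p_U is the random gauge function of U), then {x ∈ E : g(x) ≤ 1} = U. -/

import Mathlib

noncomputable section

open MeasureTheory Set Pointwise Filter Topology

namespace PaperL0

variable {Ω : Type*} [MeasurableSpace Ω]

instance commRingL0 (μ : Measure Ω) : CommRing (Ω →ₘ[μ] ℝ) :=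
  { (inferInstance : AddCommGroup (Ω →ₘ[μ] ℝ)),
    (inferInstance : CommMonoid (Ω →ₘ[μ] ℝ)) with
    left_distrib := fun f g h => MeasureTheory.AEEqFun.toGerm_injective <| by
      simp [MeasureTheory.AEEqFun.mul_toGerm, MeasureTheory.AEEqFun.add_toGerm, mul_add]
    right_distrib := fun f g h => MeasureTheory.AEEqFun.toGerm_injective <| by
      simp [MeasureTheory.AEEqFun.mul_toGerm, MeasureTheory.AEEqFun.add_toGerm, add_mul]
    zero_mul := fun f => MeasureTheory.AEEqFun.toGerm_injective <| by
      simp [MeasureTheory.AEEqFun.mul_toGerm, MeasureTheory.AEEqFun.zero_toGerm]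
    mul_zero := fun f => MeasureTheory.AEEqFun.toGerm_injective <| by
      simp [MeasureTheory.AEEqFun.mul_toGerm, MeasureTheory.AEEqFun.zero_toGerm] }

variable (μ : Measure Ω)

/-- `L⁰₊`, the set of nonnegative elements of `L⁰`. -/
def Lpos : Set (Ω →ₘ[μ] ℝ) := {ξ | 0 ≤ ξ}

/-- `L⁰₊₊`, the set of elements of `L⁰` which are `> 0` a.e. on `Ω`. -/
def Lspos : Set (Ω →ₘ[μ] ℝ) := {ξ | ∀ᵐ ω ∂μ, 0 < ξ ω}

/-- The absolute value `|ξ|` of an element of `L⁰`. -/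
def aabs {μ : Measure Ω} (ξ : Ω →ₘ[μ] ℝ) : Ω →ₘ[μ] ℝ := ξ ⊔ -ξ

/-- `B_ε = {ξ ∈ L⁰ : |ξ| ≤ ε}`. -/
def ball (ε : Ω →ₘ[μ] ℝ) : Set (Ω →ₘ[μ] ℝ) := {ξ | aabs ξ ≤ ε}

open Classical in
/-- `Ĩ_A`, the equivalence class of the indicator function of a (measurable) set `A`. -/
def ind (A : Set Ω) : Ω →ₘ[μ] ℝ :=
  if h : MeasurableSet A then
    AEEqFun.mk (A.indicator fun _ => (1 : ℝ))
      ((measurable_const.indicator h).aestronglyMeasurable)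
  else 0

/-- A countable measurable partition of `Ω`. -/
def IsMeasPartition (A : ℕ → Set Ω) : Prop :=
  (∀ n, MeasurableSet (A n)) ∧ Pairwise (Function.onFun Disjoint A) ∧ (⋃ n, A n) = Set.univ

variable {E : Type*} [AddCommGroup E] [Module (Ω →ₘ[μ] ℝ) E]

/-- `L⁰`-convexity of a subset of an `L⁰`-module. -/
def IsL0Convex (U : Set E) : Prop :=
  ∀ x ∈ U, ∀ y ∈ U, ∀ ξ : Ω →ₘ[μ] ℝ, 0 ≤ ξ → ξ ≤ 1 → ξ • x + (1 - ξ) • y ∈ U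

/-- `L⁰`-absorbency of a subset of an `L⁰`-module. -/
def IsL0Absorbent (U : Set E) : Prop := ∀ x : E, ∃ ξ ∈ Lspos μ, x ∈ ξ • U

/-- `L⁰`-balancedness of a subset of an `L⁰`-module. -/
def IsL0Balanced (U : Set E) : Prop :=
  ∀ x ∈ U, ∀ ξ : Ω →ₘ[μ] ℝ, aabs ξ ≤ 1 → ξ • x ∈ U

/-- An `L⁰`-seminorm on an `L⁰`-module. -/
structure IsL0Seminorm (p : E → Ω →ₘ[μ] ℝ) : Prop where
  nonneg : ∀ x, 0 ≤ p x
  homog : ∀ (ξ : Ω →ₘ[μ] ℝ) (x : E), p (ξ • x) = aabs ξ * p x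
  triangle : ∀ x y, p (x + y) ≤ p x + p y

/-- The countable concatenation property for a subset of an `L⁰`-module. -/
def HasCCP (G : Set E) : Prop :=
  ∀ x : ℕ → E, (∀ n, x n ∈ G) → ∀ A : ℕ → Set Ω, IsMeasPartition A →
    (∃ y : E, ∀ n, ind μ (A n) • y = ind μ (A n) • x n) ∧
      ∀ y : E, (∀ n, ind μ (A n) • y = ind μ (A n) • x n) → y ∈ G

/-- The relative countable concatenation property for a subset of an `L⁰`-module. -/
def HasRelCCP (G : Set E) : Prop :=
  ∀ x : ℕ → E, (∀ n, x n ∈ G) → ∀ A : ℕ → Set Ω, IsMeasPartition A →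
    ∀ y : E, (∀ n, ind μ (A n) • y = ind μ (A n) • x n) → y ∈ G

/-- A `P`-atom of a measure. -/
def IsPAtom (A : Set Ω) : Prop :=
  MeasurableSet A ∧ 0 < μ A ∧ ∀ B, MeasurableSet B → B ⊆ A → μ B = 0 ∨ μ B = μ A

end PaperL0

open PaperL0

/-- Proposition 2.6(2): for a finite family Ps of L⁰-seminorms and ε ∈ L⁰₊₊, with
U = {x : p x ≤ ε for all p ∈ Ps}, the random gauge function g = p_U of U satisfies
{x : g x ≤ 1} = U. -/
theorem statement3
    {Ω : Type*} [MeasurableSpace Ω] (P : Measure Ω) [IsProbabilityMeasure P]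
    {E : Type*} [AddCommGroup E] [Module (Ω →ₘ[P] ℝ) E]
    (Ps : Set (E → Ω →ₘ[P] ℝ)) (hfin : Ps.Finite) (hP : ∀ p ∈ Ps, IsL0Seminorm P p)
    (ε : Ω →ₘ[P] ℝ) (hε : ε ∈ Lspos P)
    (g : E → Ω →ₘ[P] ℝ)
    (hg : ∀ x : E,
      IsGLB {ξ : Ω →ₘ[P] ℝ | ξ ∈ Lpos P ∧ x ∈ ξ • {z : E | ∀ p ∈ Ps, p z ≤ ε}} (g x)) :
    {x : E | g x ≤ 1} = {z : E | ∀ p ∈ Ps, p z ≤ ε} := by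
  have hεae : ∀ᵐ ω ∂P, 0 < ε ω := hε
  have hz : ((0 : Ω →ₘ[P] ℝ) : Ω → ℝ) =ᵐ[P] (0 : Ω → ℝ) := MeasureTheory.AEEqFun.coeFn_zero
  have ho : ((1 : Ω →ₘ[P] ℝ) : Ω → ℝ) =ᵐ[P] (1 : Ω → ℝ) := MeasureTheory.AEEqFun.coeFn_one
  ext x
  simp only [Set.mem_setOf_eq]
  constructor
  · intro hx p hp
    set εinv : Ω →ₘ[P] ℝ :=
      MeasureTheory.AEEqFun.mk (fun ω => (ε ω)⁻¹)
        (ε.aemeasurable.inv.aestronglyMeasurable) with hεinv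
    have hεinvae : εinv =ᵐ[P] fun ω => (ε ω)⁻¹ := MeasureTheory.AEEqFun.coeFn_mk _ _
    have hlb : (p x * εinv) ∈
        lowerBounds {ξ : Ω →ₘ[P] ℝ | ξ ∈ Lpos P ∧ x ∈ ξ • {z : E | ∀ p ∈ Ps, p z ≤ ε}} := by
      rintro ξ ⟨hξ0, hξU⟩
      obtain ⟨u, hu, rfl⟩ := hξU
      have hpu : p u ≤ ε := hu p hp
      have hpu' : (p u : Ω → ℝ) ≤ᵐ[P] ε := MeasureTheory.AEEqFun.coeFn_le.2 hpu
      have hξ0' : (0 : Ω → ℝ) ≤ᵐ[P] ξ := by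
        have h0 := MeasureTheory.AEEqFun.coeFn_le.2 (hξ0 : (0 : Ω →ₘ[P] ℝ) ≤ ξ)
        filter_upwards [h0, hz] with ω h1 h2
        rw [← h2]; exact h1
      have hhom : p (ξ • u) = aabs ξ * p u := (hP p hp).homog ξ u
      have haabs : (aabs ξ : Ω → ℝ) =ᵐ[P] fun ω => max (ξ ω) (-(ξ ω)) := by
        have h1 := MeasureTheory.AEEqFun.coeFn_sup ξ (-ξ)
        have h2 := MeasureTheory.AEEqFun.coeFn_neg (f := ξ)
        filter_upwards [h1, h2] with ω e1 e2
        simp only [aabs, e1, Pi.sup_apply, e2, Pi.neg_apply]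
      rw [← MeasureTheory.AEEqFun.coeFn_le]
      have hmul1 := MeasureTheory.AEEqFun.coeFn_mul (p (ξ • u)) εinv
      have hpxu : (p (ξ • u) : Ω → ℝ) =ᵐ[P] fun ω => (aabs ξ) ω * (p u) ω := by
        rw [hhom]
        filter_upwards [MeasureTheory.AEEqFun.coeFn_mul (aabs ξ) (p u)] with ω h
        simpa using h
      filter_upwards [hmul1, hεinvae, hpxu, haabs, hpu', hξ0', hεae] with ω e1 e2 e3 e4 h5 h6 h7
      have h6' : (0 : ℝ) ≤ ξ ω := by simpa using h6
      have hne : ε ω ≠ 0 := ne_of_gt h7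
      have key : (p (ξ • u) * εinv) ω = ξ ω * (p u) ω * (ε ω)⁻¹ := by
        have hm : max (ξ ω) (-(ξ ω)) = ξ ω := max_eq_left (by linarith)
        simp only [e1, Pi.mul_apply, e2, e3, e4, hm]
      rw [key]
      calc ξ ω * (p u) ω * (ε ω)⁻¹ ≤ ξ ω * ε ω * (ε ω)⁻¹ := by
            apply mul_le_mul_of_nonneg_right _ (by positivity)
            exact mul_le_mul_of_nonneg_left h5 h6'
        _ = ξ ω := by field_simp
    have hle1 : p x * εinv ≤ 1 := le_trans ((hg x).2 hlb) hx
    have h1 : ((p x * εinv : Ω →ₘ[P] ℝ) : Ω → ℝ) ≤ᵐ[P] ((1 : Ω →ₘ[P] ℝ) : Ω → ℝ) :=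
      MeasureTheory.AEEqFun.coeFn_le.2 hle1
    rw [← MeasureTheory.AEEqFun.coeFn_le]
    filter_upwards [h1, MeasureTheory.AEEqFun.coeFn_mul (p x) εinv, hεinvae, ho, hεae]
      with ω e1 e2 e3 e4 e5
    have hle : (p x) ω * (ε ω)⁻¹ ≤ 1 := by
      rw [e2] at e1; simp only [Pi.mul_apply, e3] at e1; rw [e4] at e1
      simpa using e1
    have hne : ε ω ≠ 0 := ne_of_gt e5
    calc (p x) ω = (p x) ω * (ε ω)⁻¹ * ε ω := by field_simp
      _ ≤ 1 * ε ω := mul_le_mul_of_nonneg_right hle (le_of_lt e5)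
      _ = ε ω := one_mul _
  · intro hx
    refine (hg x).1 ⟨?_, ?_⟩
    · show (0 : Ω →ₘ[P] ℝ) ≤ 1
      rw [← MeasureTheory.AEEqFun.coeFn_le]
      filter_upwards [hz, ho] with ω h0 h1
      rw [h0, h1]; exact zero_le_one
    · exact Set.mem_smul_set.2 ⟨x, hx, one_smul _ _⟩
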